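/- arXiv:2205.05594 — 3 statements merged into one kernel-verified Lean document; each statement's English description precedes it below -/
import Mathlib

section
/- If E is a uniformly random permutation of a finite set S and M ⊆ S is nonempty, then the permutation of M induced by cycle walking with E is uniformly distributed over all permutations of M. -/
section Aux

set_option linter.unusedSectionVars false

variable {S : Type*} [Fintype S] [DecidableEq S] {M : Finset S}
variable {cw : Equiv.Perm S → Equiv.Perm M}
variable (hcw : ∀ E : Equiv.Perm S, ∀ m : M, ∃ k : ℕ, 0 < k ∧
      (∀ j : ℕ, 0 < j → j < k → (⇑E)^[j] (m : S) ∉ M) ∧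
      (⇑E)^[k] (m : S) = ((cw E) m : S))

include hcw

lemma cw_unique (E : Equiv.Perm S) (m : M) (k : ℕ) (hk : 0 < k)
    (hmid : ∀ j : ℕ, 0 < j → j < k → (⇑E)^[j] (m : S) ∉ M)
    (hend : (⇑E)^[k] (m : S) ∈ M) :
    ((cw E) m : S) = (⇑E)^[k] (m : S) := by
  obtain ⟨k', hk', hmid', hend'⟩ := hcw E m
  rcases lt_trichotomy k k' with h | h | h
  · exact absurd hend (hmid' k hk h)
  · rw [← h] at hend'; exact hend'.symm
  · exact absurd (hend' ▸ ((cw E) m).2) (hmid k' hk' h)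

lemma cw_equivariant (ρ : Equiv.Perm M) (E : Equiv.Perm S) :
    cw ((ρ.extendDomain (Equiv.refl (↥M))) * E) = ρ * cw E := by
  set F : Equiv.Perm S := (ρ.extendDomain (Equiv.refl (↥M))) * E with hF
  ext m
  obtain ⟨k, hk, hmid, hend⟩ := hcw E m
  have hiter : ∀ j : ℕ, j < k → (⇑F)^[j] (m : S) = (⇑E)^[j] (m : S) := by
    intro j
    induction j with
    | zero => intro _; rfl
    | succ n ih =>
      intro h
      have hn : n < k := Nat.lt_of_succ_lt h
      rw [Function.iterate_succ_apply', Function.iterate_succ_apply', ih hn]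
      show (ρ.extendDomain (Equiv.refl (↥M))) (E ((⇑E)^[n] (m : S))) = E ((⇑E)^[n] (m : S))
      rw [← Function.iterate_succ_apply' (⇑E) n (m : S)]
      exact Equiv.Perm.extendDomain_apply_not_subtype _ _ (hmid (n+1) (Nat.succ_pos n) h)
  have hFk : (⇑F)^[k] (m : S) = ((ρ ((cw E) m)) : S) := by
    obtain ⟨n, rfl⟩ : ∃ n, k = n + 1 := ⟨k - 1, (Nat.succ_pred_eq_of_pos hk).symm⟩
    rw [Function.iterate_succ_apply', hiter n (Nat.lt_succ_self n)]
    show (ρ.extendDomain (Equiv.refl (↥M))) (E ((⇑E)^[n] (m : S))) = _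
    rw [← Function.iterate_succ_apply' (⇑E) n (m : S), hend]
    rw [Equiv.Perm.extendDomain_apply_subtype _ _ ((cw E) m).2]
    simp
  have key := cw_unique hcw F m k hk
    (fun j hj hjk => by rw [hiter j hjk]; exact hmid j hj hjk)
    (by rw [hFk]; exact (ρ ((cw E) m)).2)
  rw [hFk] at key
  show ((cw F) m : S) = ((ρ ((cw E) m)) : S)
  exact key

lemma cw_one : cw 1 = 1 := by
  ext m
  obtain ⟨k, hk, hmid, hend⟩ := hcw 1 m
  have h1 : (⇑(1 : Equiv.Perm S))^[k] (m : S) = (m : S) := by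
    simp [Equiv.Perm.coe_one]
  rw [h1] at hend
  simp [← hend]

end Aux

theorem stmt_14 (S : Type*) [Fintype S] [DecidableEq S] (M : Finset S) (hM : M.Nonempty)
    (cw : Equiv.Perm S → Equiv.Perm M)
    (hcw : ∀ E : Equiv.Perm S, ∀ m : M, ∃ k : ℕ, 0 < k ∧
      (∀ j : ℕ, 0 < j → j < k → (⇑E)^[j] (m : S) ∉ M) ∧
      (⇑E)^[k] (m : S) = ((cw E) m : S)) :
    (PMF.uniformOfFintype (Equiv.Perm S)).map cw
      = PMF.uniformOfFintype (Equiv.Perm M) := by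
  classical
  set N : Equiv.Perm M → ℕ := fun τ => (Finset.univ.filter fun E => cw E = τ).card with hN
  have hNconst : ∀ τ : Equiv.Perm M, N τ = N 1 := by
    intro τ
    apply Finset.card_bij' (fun E _ => (τ.extendDomain (Equiv.refl (↥M)))⁻¹ * E)
      (fun E _ => (τ.extendDomain (Equiv.refl (↥M))) * E)
    · intro E hE
      simp only [Finset.mem_filter, Finset.mem_univ, true_and] at hE ⊢
      rw [Equiv.Perm.extendDomain_inv, cw_equivariant hcw, hE, inv_mul_cancel]
    · intro E hE
      simp only [Finset.mem_filter, Finset.mem_univ, true_and] at hE ⊢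
      rw [cw_equivariant hcw, hE, mul_one]
    · intro E _; group
    · intro E _; group
  have hsum : Fintype.card (Equiv.Perm S)
      = Fintype.card (Equiv.Perm M) * N 1 := by
    have h := Finset.card_eq_sum_card_fiberwise
      (f := cw) (s := Finset.univ) (t := Finset.univ)
      (fun E _ => Finset.mem_univ (cw E))
    rw [Finset.card_univ] at h
    rw [h]
    simp only [← hN, fun τ => hNconst τ]
    rw [Finset.sum_const, Finset.card_univ, smul_eq_mul]
  have hN1pos : N 1 ≠ 0 := by
    have h1 : (1 : Equiv.Perm S) ∈ Finset.univ.filter fun E => cw E = 1 := by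
      simp [cw_one hcw]
    exact Finset.card_ne_zero_of_mem h1
  ext τ
  rw [PMF.map_apply, tsum_fintype, PMF.uniformOfFintype_apply]
  calc _ = ∑ E : Equiv.Perm S,
        (if cw E = τ then ((Fintype.card (Equiv.Perm S) : ENNReal))⁻¹ else 0) :=
        Finset.sum_congr rfl (fun E _ => by
          by_cases h : cw E = τ
          · simp [PMF.uniformOfFintype_apply, h]
          · rw [if_neg (fun he => h he.symm), if_neg h])
    _ = ∑ _E ∈ Finset.univ.filter (fun E => cw E = τ),
        ((Fintype.card (Equiv.Perm S) : ENNReal))⁻¹ := (Finset.sum_filter _ _).symm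
    _ = (N τ : ENNReal) * (Fintype.card (Equiv.Perm S) : ENNReal)⁻¹ := by
        rw [Finset.sum_const, nsmul_eq_mul]
    _ = (N 1 : ENNReal) * (((Fintype.card (Equiv.Perm M)) : ENNReal) * (N 1 : ENNReal))⁻¹ := by
        rw [hNconst τ, hsum]; push_cast; ring_nf
    _ = (Fintype.card (Equiv.Perm M) : ENNReal)⁻¹ := by
        rw [ENNReal.mul_inv (Or.inl (by exact_mod_cast Fintype.card_ne_zero))
          (Or.inl (ENNReal.natCast_ne_top _)),
          mul_comm ((Fintype.card (Equiv.Perm M) : ENNReal))⁻¹ _, ← mul_assoc,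
          ENNReal.mul_inv_cancel (by exact_mod_cast hN1pos) (ENNReal.natCast_ne_top _), one_mul]
end

section
/- Barret reduction is correct: let b be an n-bit positive integer, a a positive integer with a < 2^{m} and a < b², where m = bit-length of a, and set q = ⌊2^{m+1}/b⌋ and r = a - ⌊aq/2^{m+1}⌋·b. Then 0 ≤ r < 2b, and consequently a mod b equals r if r < b and r - b otherwise. -/
theorem stmt_17 (a b : ℤ) (n m : ℕ) (ha : 0 < a) (hb : 0 < b)
    (hn : n = Nat.size b.toNat) (hm : m = Nat.size a.toNat)
    (ham : a < 2 ^ m) (hab : a < b ^ 2)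
    (q r : ℤ) (hq : q = 2 ^ (m + 1) / b) (hr : r = a - a * q / 2 ^ (m + 1) * b) :
    0 ≤ r ∧ r < 2 * b ∧ a % b = (if r < b then r else r - b) := by
  set M : ℤ := 2 ^ (m + 1) with hM
  have hM0 : (0:ℤ) < M := by positivity
  set t : ℤ := a * q / M with ht
  have h1 : q * b ≤ M := by rw [hq]; exact Int.ediv_mul_le M hb.ne'
  have h2 : M < (q + 1) * b := by rw [hq]; exact Int.lt_ediv_add_one_mul_self M hb
  have haM : a < M := by
    have : (2:ℤ)^m ≤ 2^(m+1) := pow_le_pow_right₀ (by norm_num) (m.le_succ)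
    linarith
  have h3 : t * M ≤ a * q := by rw [ht]; exact Int.ediv_mul_le (a*q) hM0.ne'
  have h4 : a * q < (t + 1) * M := by rw [ht]; exact Int.lt_ediv_add_one_mul_self (a*q) hM0
  have hA : t * b ≤ a := by
    have k1 := mul_le_mul_of_nonneg_right h3 hb.le
    have k2 := mul_le_mul_of_nonneg_left h1 ha.le
    have h5 : t * b * M ≤ a * M := by nlinarith
    exact le_of_mul_le_mul_right h5 hM0
  have hB : a - 2 * b < t * b := by
    have h6 : (a - b) * M < (t * b + b) * M := by
      have k3 := mul_lt_mul_of_pos_right h4 hb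
      have k4 := mul_lt_mul_of_pos_left h2 ha
      have k5 := mul_lt_mul_of_pos_right haM hb
      nlinarith
    have h7 := le_of_mul_le_mul_right h6.le hM0
    nlinarith
  have hr0 : 0 ≤ r := by rw [hr]; linarith
  have hr2b : r < 2 * b := by rw [hr]; linarith
  refine ⟨hr0, hr2b, ?_⟩
  have hmod : a % b = r % b := by
    conv_lhs => rw [show a = r + b * t by rw [hr]; ring]
    rw [Int.add_mul_emod_self_left]
  rw [hmod]
  by_cases hcase : r < b
  · rw [if_pos hcase, Int.emod_eq_of_lt hr0 hcase]
  · rw [if_neg hcase, ← Int.sub_emod_right r b,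
      Int.emod_eq_of_lt (by linarith) (by linarith)]
end

section
/- Correctness of CRT-based iterated multiplication: let x_1, ..., x_k be positive integers and p_1, ..., p_h distinct primes with Π p_i > Π x_j. For each i, let g_i be a generator of (ℤ/p_iℤ)*, let r_{i,j} = log_{g_i}(x_j mod p_i) (assuming p_i ∤ x_j for all j), and let y_i = g_i^{Σ_j r_{i,j} mod (p_i - 1)} mod p_i. Then the unique y with 0 ≤ y < Π p_i and y ≡ y_i (mod p_i) for all i equals Π_{j=1}^k x_j. -/
theorem stmt_19 (k h : ℕ) (x : Fin k → ℕ) (p : Fin h → ℕ)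
    (hx : ∀ j, 0 < x j) (hp : ∀ i, (p i).Prime) (hdist : Function.Injective p)
    (hbig : ∏ j, x j < ∏ i, p i)
    (g : (i : Fin h) → (ZMod (p i))ˣ)
    (hg : ∀ i, ∀ u : (ZMod (p i))ˣ, u ∈ Subgroup.zpowers (g i))
    (hnd : ∀ i j, ¬ (p i ∣ x j))
    (r : Fin h → Fin k → ℕ)
    (hr : ∀ i j, ((g i : ZMod (p i)) ^ (r i j)) = ((x j : ZMod (p i))))
    (y : ℕ) (hy : y < ∏ i, p i)
    (hcrt : ∀ i, (y : ZMod (p i)) = (g i : ZMod (p i)) ^ ((∑ j, r i j) % (p i - 1))) :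
    y = ∏ j, x j := by
  have hfact : ∀ i, Fact (p i).Prime := fun i => ⟨hp i⟩
  set P := ∏ j, x j with hP
  -- each prime: y ≡ P mod p i
  have hmod : ∀ i, y ≡ P [MOD p i] := by
    intro i
    haveI := hfact i
    rw [← ZMod.natCast_eq_natCast_iff]
    rw [hcrt i]
    have hcard : Fintype.card (ZMod (p i))ˣ = p i - 1 := by
      rw [ZMod.card_units_eq_totient, Nat.totient_prime (hp i)]
    have hone : (g i) ^ (p i - 1) = 1 := by
      rw [← hcard]; exact pow_card_eq_one
    have key : (g i) ^ ((∑ j, r i j) % (p i - 1)) = (g i) ^ (∑ j, r i j) := by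
      conv_rhs => rw [← Nat.mod_add_div (∑ j, r i j) (p i - 1)]
      rw [pow_add, pow_mul, hone, one_pow, mul_one]
    have : ((g i : ZMod (p i)) ^ ((∑ j, r i j) % (p i - 1))) =
        (g i : ZMod (p i)) ^ (∑ j, r i j) := by
      exact_mod_cast congrArg (Units.val) key
    rw [this, ← Finset.prod_pow_eq_pow_sum]
    have : ∀ j, (g i : ZMod (p i)) ^ (r i j) = ((x j : ℕ) : ZMod (p i)) := hr i
    rw [Finset.prod_congr rfl (fun j _ => this j)]
    rw [hP]
    push_cast
    rfl
  -- product of primes divides y - P over ℤ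
  have hdvd : ∀ i, (p i : ℤ) ∣ (y : ℤ) - (P : ℤ) :=
    fun i => (hmod i).symm.dvd
  have hcop : Pairwise (Function.onFun IsCoprime fun i => (p i : ℤ)) := by
    intro i j hij
    rw [Function.onFun, Int.isCoprime_iff_gcd_eq_one]
    exact (Nat.coprime_primes (hp i) (hp j)).mpr (fun e => hij (hdist e))
  have hNdvd : (∏ i, (p i : ℤ)) ∣ (y : ℤ) - (P : ℤ) :=
    Fintype.prod_dvd_of_coprime hcop hdvd
  have hN : (∏ i, (p i : ℤ)) = ((∏ i, p i : ℕ) : ℤ) := by push_cast; rfl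
  rw [hN] at hNdvd
  have habs : |(y : ℤ) - (P : ℤ)| < ((∏ i, p i : ℕ) : ℤ) := by
    have h1 : (y : ℤ) < ((∏ i, p i : ℕ) : ℤ) := by exact_mod_cast hy
    have h2 : (P : ℤ) < ((∏ i, p i : ℕ) : ℤ) := by exact_mod_cast hbig
    have h3 : (0 : ℤ) ≤ (y : ℤ) := Int.natCast_nonneg _
    have h4 : (0 : ℤ) ≤ (P : ℤ) := Int.natCast_nonneg _
    rw [abs_sub_lt_iff]; omega
  have hyP : (y : ℤ) - (P : ℤ) = 0 := Int.eq_zero_of_abs_lt_dvd hNdvd habs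
  have : (y : ℤ) = (P : ℤ) := by omega
  exact_mod_cast this
end
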